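/- In the syntactic pomset automaton, if e ⪯_Σ f† ⪯_Σ e for spr-expressions e, f, then e ≃ f†. -/
import Mathlib


open Classical

noncomputable section

/-- Series-parallel rational expressions. -/
inductive SPR (A : Type) : Type where
  | zero : SPR A
  | one : SPR A
  | var (a : A) : SPR A
  | add (e f : SPR A) : SPR A
  | seq (e f : SPR A) : SPR A
  | par (e f : SPR A) : SPR A
  | star (e : SPR A) : SPR A
  | dagger (e : SPR A) : SPR A

/-- The set ℱ of expressions accepting the empty pomset. -/
inductive Null {A : Type} : SPR A → Prop where
  | one : Null SPR.one
  | addL {e : SPR A} (f : SPR A) : Null e → Null (SPR.add e f)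
  | addR {e : SPR A} (f : SPR A) : Null e → Null (SPR.add f e)
  | seq {e f : SPR A} : Null e → Null f → Null (SPR.seq e f)
  | par {e f : SPR A} : Null e → Null f → Null (SPR.par e f)
  | star (e : SPR A) : Null (SPR.star e)
  | dagger (e : SPR A) : Null (SPR.dagger e)

/-- The syntactic congruence ≃: ACI of + and left-distributivity of + over ·. -/
inductive cong {A : Type} : SPR A → SPR A → Prop where
  | add_zero (e : SPR A) : cong (SPR.add e SPR.zero) e
  | add_idem (e : SPR A) : cong (SPR.add e e) e
  | add_comm (e f : SPR A) : cong (SPR.add e f) (SPR.add f e)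
  | add_assoc (e f g : SPR A) : cong (SPR.add e (SPR.add f g)) (SPR.add (SPR.add e f) g)
  | distrib (e f g : SPR A) :
      cong (SPR.seq (SPR.add e f) g) (SPR.add (SPR.seq e g) (SPR.seq f g))
  | refl (e : SPR A) : cong e e
  | symm {e f : SPR A} : cong e f → cong f e
  | trans {e f g : SPR A} : cong e f → cong f g → cong e g
  | add_congr {e e' f f' : SPR A} :
      cong e e' → cong f f' → cong (SPR.add e f) (SPR.add e' f')
  | seq_congr {e e' f f' : SPR A} :
      cong e e' → cong f f' → cong (SPR.seq e f) (SPR.seq e' f')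
  | par_congr {e e' f f' : SPR A} :
      cong e e' → cong f f' → cong (SPR.par e f) (SPR.par e' f')
  | star_congr {e e' : SPR A} : cong e e' → cong (SPR.star e) (SPR.star e')
  | dagger_congr {e e' : SPR A} : cong e e' → cong (SPR.dagger e) (SPR.dagger e')

/-- `e ⋆ f`: `f` if `e` is nullable, `0` otherwise. -/
def estar {A : Type} (e f : SPR A) : SPR A := if Null e then f else SPR.zero

/-- `e ⨟ f`: `0` if `e ≃ 0`, `e · f` otherwise. -/
def eseq {A : Type} (e f : SPR A) : SPR A :=
  if cong e SPR.zero then SPR.zero else SPR.seq e f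

/-- The Brzozowski-style sequential derivative δ_Σ. -/
def dseq {A : Type} : SPR A → A → SPR A
  | SPR.zero, _ => SPR.zero
  | SPR.one, _ => SPR.zero
  | SPR.var b, a => if a = b then SPR.one else SPR.zero
  | SPR.add e f, a => SPR.add (dseq e a) (dseq f a)
  | SPR.seq e f, a => SPR.add (eseq (dseq e a) f) (estar e (dseq f a))
  | SPR.par _ _, _ => SPR.zero
  | SPR.star e, a => eseq (dseq e a) (SPR.star e)
  | SPR.dagger _, _ => SPR.zero

/-- The Brzozowski-style parallel derivative γ_Σ. -/
def dgam {A : Type} : SPR A → SPR A → SPR A → SPR A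
  | SPR.zero, _, _ => SPR.zero
  | SPR.one, _, _ => SPR.zero
  | SPR.var _, _, _ => SPR.zero
  | SPR.add e f, g, h => SPR.add (dgam e g h) (dgam f g h)
  | SPR.seq e f, g, h => SPR.add (eseq (dgam e g h) f) (estar e (dgam f g h))
  | SPR.par e f, g, h => if cong g e ∧ cong h f then SPR.one else SPR.zero
  | SPR.star e, g, h => eseq (dgam e g h) (SPR.star e)
  | SPR.dagger e, g, h =>
      if cong g e ∧ cong h (SPR.dagger e) then SPR.one else SPR.zero

/-- The trace dependency preorder ⪯_Σ of the syntactic pomset automaton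
(on raw expressions, compatible with the congruence ≃). -/
inductive dleq {A : Type} : SPR A → SPR A → Prop where
  | refl (e : SPR A) : dleq e e
  | trans {e f g : SPR A} : dleq e f → dleq f g → dleq e g
  | congr {e f : SPR A} : cong e f → dleq e f
  | delta (e : SPR A) (a : A) : dleq (dseq e a) e
  | gamma (e g h : SPR A) : dleq (dgam e g h) e
  | forkL {e g h : SPR A} : ¬ cong (dgam e g h) SPR.zero → dleq g e
  | forkR {e g h : SPR A} : ¬ cong (dgam e g h) SPR.zero → dleq h e

/-- Maximal nesting of parallel composition in an expression. -/
def dpar {A : Type} : SPR A → ℕ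
  | SPR.zero => 0
  | SPR.one => 0
  | SPR.var _ => 0
  | SPR.add e f => max (dpar e) (dpar f)
  | SPR.seq e f => max (dpar e) (dpar f)
  | SPR.par e f => max (dpar e) (dpar f) + 1
  | SPR.star e => dpar e
  | SPR.dagger e => dpar e

/-- Maximal nesting of the parallel star in an expression. -/
def ddag {A : Type} : SPR A → ℕ
  | SPR.zero => 0
  | SPR.one => 0
  | SPR.var _ => 0
  | SPR.add e f => max (ddag e) (ddag f)
  | SPR.seq e f => max (ddag e) (ddag f)
  | SPR.par e f => max (ddag e) (ddag f)
  | SPR.star e => ddag e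
  | SPR.dagger e => ddag e + 1

section Aux
variable {A : Type}

/-- Boolean nullability. -/
def nullB : SPR A → Bool
  | .zero => false
  | .one => true
  | .var _ => false
  | .add e f => nullB e || nullB f
  | .seq e f => nullB e && nullB f
  | .par e f => nullB e && nullB f
  | .star _ => true
  | .dagger _ => true

lemma nullB_of_null {e : SPR A} (h : Null e) : nullB e = true := by
  induction h <;> simp [nullB, *]

lemma null_of_nullB : ∀ e : SPR A, nullB e = true → Null e := by
  intro e
  induction e with
  | zero => simp [nullB]
  | one => intro _; exact .one
  | var a => simp [nullB]
  | add e f ihe ihf =>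
      intro h; simp [nullB] at h
      rcases h with h | h
      · exact .addL _ (ihe h)
      · exact .addR _ (ihf h)
  | seq e f ihe ihf =>
      intro h; simp [nullB] at h; exact .seq (ihe h.1) (ihf h.2)
  | par e f ihe ihf =>
      intro h; simp [nullB] at h; exact .par (ihe h.1) (ihf h.2)
  | star e _ => intro _; exact .star e
  | dagger e _ => intro _; exact .dagger e

lemma null_iff (e : SPR A) : Null e ↔ nullB e = true :=
  ⟨nullB_of_null, null_of_nullB e⟩

lemma null_cong {e f : SPR A} (h : cong e f) : Null e ↔ Null f := by
  rw [null_iff, null_iff]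
  induction h with
  | add_zero e => simp [nullB]
  | add_idem e => simp [nullB]
  | add_comm e f => simp [nullB, Bool.or_comm]
  | add_assoc e f g => simp [nullB, Bool.or_assoc]
  | distrib e f g => simp [nullB]; tauto
  | refl e => rfl
  | symm _ ih => exact ih.symm
  | trans _ _ ih1 ih2 => exact ih1.trans ih2
  | add_congr _ _ ih1 ih2 => simp [nullB, ih1, ih2]
  | seq_congr _ _ ih1 ih2 => simp [nullB, ih1, ih2]
  | par_congr _ _ ih1 ih2 => simp [nullB, ih1, ih2]
  | star_congr _ _ => simp [nullB]
  | dagger_congr _ _ => simp [nullB]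

lemma null_add_iff (e f : SPR A) : Null (SPR.add e f) ↔ Null e ∨ Null f := by
  simp [null_iff, nullB]

/-- Boolean test for being congruent to zero. -/
def iszero : SPR A → Bool
  | .zero => true
  | .add e f => iszero e && iszero f
  | _ => false

lemma iszero_cong {e f : SPR A} (h : cong e f) : iszero e = iszero f := by
  induction h with
  | add_zero e => simp [iszero]
  | add_idem e => simp [iszero]
  | add_comm e f => simp [iszero, Bool.and_comm]
  | add_assoc e f g => simp [iszero, Bool.and_assoc]
  | distrib e f g => simp [iszero]
  | refl e => rfl
  | symm _ ih => exact ih.symm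
  | trans _ _ ih1 ih2 => exact ih1.trans ih2
  | add_congr _ _ ih1 ih2 => simp [iszero, ih1, ih2]
  | seq_congr _ _ _ _ => simp [iszero]
  | par_congr _ _ _ _ => simp [iszero]
  | star_congr _ _ => simp [iszero]
  | dagger_congr _ _ => simp [iszero]

lemma cong_zero_of_iszero : ∀ e : SPR A, iszero e = true → cong e SPR.zero := by
  intro e
  induction e with
  | zero => intro _; exact .refl _
  | add e f ihe ihf =>
      intro h; simp [iszero] at h
      exact (cong.add_congr (ihe h.1) (ihf h.2)).trans (cong.add_zero _)
  | one => simp [iszero]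
  | var a => simp [iszero]
  | seq e f _ _ => simp [iszero]
  | par e f _ _ => simp [iszero]
  | star e _ => simp [iszero]
  | dagger e _ => simp [iszero]

lemma cong_zero_iff (e : SPR A) : cong e SPR.zero ↔ iszero e = true :=
  ⟨fun h => (iszero_cong h).trans rfl, cong_zero_of_iszero e⟩

lemma add_cong_zero_iff {x y : SPR A} :
    cong (SPR.add x y) SPR.zero ↔ cong x SPR.zero ∧ cong y SPR.zero := by
  simp [cong_zero_iff, iszero]

lemma czadd (e : SPR A) : cong (SPR.add SPR.zero e) e :=
  (cong.add_comm _ _).trans (cong.add_zero e)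

lemma swap4 (a b c d : SPR A) :
    cong (SPR.add (SPR.add a b) (SPR.add c d)) (SPR.add (SPR.add a c) (SPR.add b d)) := by
  refine cong.trans (cong.symm (cong.add_assoc a b (SPR.add c d))) ?_
  refine cong.trans (cong.add_congr (cong.refl a) (cong.add_assoc b c d)) ?_
  refine cong.trans (cong.add_congr (cong.refl a)
    (cong.add_congr (cong.add_comm b c) (cong.refl d))) ?_
  refine cong.trans (cong.add_congr (cong.refl a) (cong.symm (cong.add_assoc c b d))) ?_
  exact cong.add_assoc a c (SPR.add b d)

lemma eseq_congr {x x' y y' : SPR A} (hx : cong x x') (hy : cong y y') :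
    cong (eseq x y) (eseq x' y') := by
  unfold eseq
  by_cases h : cong x SPR.zero
  · have h' : cong x' SPR.zero := (cong.symm hx).trans h
    simp [h, h']; exact .refl _
  · have h' : ¬ cong x' SPR.zero := fun c => h (hx.trans c)
    simp [h, h']; exact .seq_congr hx hy

lemma estar_congr {e e' y y' : SPR A} (hn : Null e ↔ Null e') (hy : cong y y') :
    cong (estar e y) (estar e' y') := by
  unfold estar
  by_cases h : Null e
  · simp [h, hn.mp h]; exact hy
  · have h' : ¬ Null e' := fun h'' => h (hn.mpr h'')
    simp [h, h']; exact .refl _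

lemma eseq_add (x y g : SPR A) :
    cong (eseq (SPR.add x y) g) (SPR.add (eseq x g) (eseq y g)) := by
  unfold eseq
  by_cases hx : cong x SPR.zero <;> by_cases hy : cong y SPR.zero
  · have : cong (SPR.add x y) SPR.zero := add_cong_zero_iff.mpr ⟨hx, hy⟩
    simp [hx, hy, this]; exact cong.symm (cong.add_zero _)
  · have hne : ¬ cong (SPR.add x y) SPR.zero := fun h => hy (add_cong_zero_iff.mp h).2
    simp [hx, hy, hne]
    refine cong.trans ?_ (cong.symm (czadd _))
    exact cong.seq_congr ((cong.add_congr hx (cong.refl y)).trans (czadd y)) (cong.refl g)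
  · have hne : ¬ cong (SPR.add x y) SPR.zero := fun h => hx (add_cong_zero_iff.mp h).1
    simp [hx, hy, hne]
    refine cong.trans ?_ (cong.symm (cong.add_zero _))
    exact cong.seq_congr ((cong.add_congr (cong.refl x) hy).trans (cong.add_zero x)) (cong.refl g)
  · have hne : ¬ cong (SPR.add x y) SPR.zero := fun h => hx (add_cong_zero_iff.mp h).1
    simp [hx, hy, hne]; exact cong.distrib x y g

lemma estar_add (e f y : SPR A) :
    cong (estar (SPR.add e f) y) (SPR.add (estar e y) (estar f y)) := by
  unfold estar
  by_cases he : Null e <;> by_cases hf : Null f <;>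
    simp [he, hf, null_add_iff]
  · exact cong.symm (cong.add_idem y)
  · exact cong.symm (cong.add_zero y)
  · exact cong.symm (czadd y)
  · exact cong.symm (cong.add_zero _)

lemma dseq_compat {e e' : SPR A} (h : cong e e') (a : A) :
    cong (dseq e a) (dseq e' a) := by
  induction h with
  | add_zero e => simpa [dseq] using cong.add_zero (dseq e a)
  | add_idem e => exact cong.add_idem _
  | add_comm e f => exact cong.add_comm _ _
  | add_assoc e f g => exact cong.add_assoc _ _ _
  | distrib e f g =>
      show cong (SPR.add (eseq (SPR.add (dseq e a) (dseq f a)) g)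
          (estar (SPR.add e f) (dseq g a))) _
      refine cong.trans (cong.add_congr (eseq_add _ _ _) (estar_add _ _ _)) ?_
      exact cong.symm (swap4 _ _ _ _)
  | refl e => exact .refl _
  | symm _ ih => exact ih.symm
  | trans _ _ ih1 ih2 => exact ih1.trans ih2
  | add_congr _ _ ih1 ih2 => exact cong.add_congr ih1 ih2
  | seq_congr h1 h2 ih1 ih2 =>
      exact cong.add_congr (eseq_congr ih1 h2) (estar_congr (null_cong h1) ih2)
  | par_congr _ _ _ _ => exact .refl _
  | star_congr h1 ih => exact eseq_congr ih (cong.star_congr h1)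
  | dagger_congr _ _ => exact .refl _

lemma dgam_compat {e e' : SPR A} (h : cong e e') (g h' : SPR A) :
    cong (dgam e g h') (dgam e' g h') := by
  induction h with
  | add_zero e => simpa [dgam] using cong.add_zero (dgam e g h')
  | add_idem e => exact cong.add_idem _
  | add_comm e f => exact cong.add_comm _ _
  | add_assoc e f g => exact cong.add_assoc _ _ _
  | distrib e f g0 =>
      show cong (SPR.add (eseq (SPR.add (dgam e g h') (dgam f g h')) g0)
          (estar (SPR.add e f) (dgam g0 g h'))) _
      refine cong.trans (cong.add_congr (eseq_add _ _ _) (estar_add _ _ _)) ?_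
      exact cong.symm (swap4 _ _ _ _)
  | refl e => exact .refl _
  | symm _ ih => exact ih.symm
  | trans _ _ ih1 ih2 => exact ih1.trans ih2
  | add_congr _ _ ih1 ih2 => exact cong.add_congr ih1 ih2
  | seq_congr h1 h2 ih1 ih2 =>
      exact cong.add_congr (eseq_congr ih1 h2) (estar_congr (null_cong h1) ih2)
  | @par_congr e e' f f' h1 h2 _ _ =>
      show cong (if cong g e ∧ cong h' f then SPR.one else SPR.zero) _
      have : (cong g e ∧ cong h' f) ↔ (cong g e' ∧ cong h' f') := by
        constructor
        · rintro ⟨c1, c2⟩; exact ⟨c1.trans h1, c2.trans h2⟩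
        · rintro ⟨c1, c2⟩; exact ⟨c1.trans h1.symm, c2.trans h2.symm⟩
      by_cases hc : cong g e ∧ cong h' f
      · simp [dgam, hc, this.mp hc]; exact .refl _
      · simp [dgam, hc, this.not.mp hc]; exact .refl _
  | star_congr h1 ih => exact eseq_congr ih (cong.star_congr h1)
  | @dagger_congr e e' h1 _ =>
      show cong (if cong g e ∧ cong h' (SPR.dagger e) then SPR.one else SPR.zero) _
      have : (cong g e ∧ cong h' (SPR.dagger e)) ↔
          (cong g e' ∧ cong h' (SPR.dagger e')) := by
        constructor
        · rintro ⟨c1, c2⟩; exact ⟨c1.trans h1, c2.trans (cong.dagger_congr h1)⟩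
        · rintro ⟨c1, c2⟩; exact ⟨c1.trans h1.symm, c2.trans (cong.dagger_congr h1.symm)⟩
      by_cases hc : cong g e ∧ cong h' (SPR.dagger e)
      · simp [dgam, hc, this.mp hc]; exact .refl _
      · simp [dgam, hc, this.not.mp hc]; exact .refl _

lemma ddag_cong {e f : SPR A} (h : cong e f) : ddag e = ddag f := by
  induction h <;> simp [ddag, *] <;> omega

lemma ddag_eseq (x y : SPR A) : ddag (eseq x y) ≤ max (ddag x) (ddag y) := by
  unfold eseq; split <;> simp [ddag]

lemma ddag_estar (e y : SPR A) : ddag (estar e y) ≤ ddag y := by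
  unfold estar; split <;> simp [ddag]

lemma ddag_dseq (e : SPR A) (a : A) : ddag (dseq e a) ≤ ddag e := by
  induction e with
  | zero => simp [dseq, ddag]
  | one => simp [dseq, ddag]
  | var b => unfold dseq; split <;> simp [ddag]
  | add e f ihe ihf => simp [dseq, ddag]; omega
  | seq e f ihe ihf =>
      have h1 := ddag_eseq (dseq e a) f
      have h2 := ddag_estar e (dseq f a)
      simp [dseq, ddag] at *; omega
  | par e f _ _ => simp [dseq, ddag]
  | star e ihe =>
      have h1 := ddag_eseq (dseq e a) (SPR.star e)
      simp [dseq, ddag] at *; omega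
  | dagger e _ => simp [dseq, ddag]

lemma ddag_dgam (e g h : SPR A) : ddag (dgam e g h) ≤ ddag e := by
  induction e with
  | zero => simp [dgam, ddag]
  | one => simp [dgam, ddag]
  | var b => simp [dgam, ddag]
  | add e f ihe ihf => simp [dgam, ddag]; omega
  | seq e f ihe ihf =>
      have h1 := ddag_eseq (dgam e g h) f
      have h2 := ddag_estar e (dgam f g h)
      simp [dgam, ddag] at *; omega
  | par e f _ _ => unfold dgam; split <;> simp [ddag]
  | star e ihe =>
      have h1 := ddag_eseq (dgam e g h) (SPR.star e)
      simp [dgam, ddag] at *; omega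
  | dagger e _ => unfold dgam; split <;> simp [ddag]

lemma not_zero_add {x y : SPR A} (h : ¬ cong (SPR.add x y) SPR.zero) :
    ¬ cong x SPR.zero ∨ ¬ cong y SPR.zero := by
  by_cases hx : cong x SPR.zero
  · right; intro hy; exact h (add_cong_zero_iff.mpr ⟨hx, hy⟩)
  · left; exact hx

lemma not_zero_eseq {x y : SPR A} (h : ¬ cong (eseq x y) SPR.zero) :
    ¬ cong x SPR.zero := by
  intro hx; apply h; simp [eseq, hx]; exact .refl _

lemma not_zero_estar {e y : SPR A} (h : ¬ cong (estar e y) SPR.zero) :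
    ¬ cong y SPR.zero := by
  intro hy; apply h; unfold estar; split
  · exact hy
  · exact .refl _

lemma fork_bound {e g h : SPR A} (hne : ¬ cong (dgam e g h) SPR.zero) :
    ddag g ≤ ddag e ∧ ddag h ≤ ddag e := by
  induction e with
  | zero => exact absurd (cong.refl _) hne
  | one => exact absurd (cong.refl _) hne
  | var b => exact absurd (cong.refl _) hne
  | add e f ihe ihf =>
      rcases not_zero_add hne with hl | hr
      · have := ihe hl; simp [ddag]; omega
      · have := ihf hr; simp [ddag]; omega
  | seq e f ihe ihf =>
      rcases not_zero_add hne with hl | hr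
      · have := ihe (not_zero_eseq hl); simp [ddag]; omega
      · have := ihf (not_zero_estar hr); simp [ddag]; omega
  | par e f _ _ =>
      by_cases hc : cong g e ∧ cong h f
      · rw [ddag_cong hc.1, ddag_cong hc.2]; constructor <;> simp [ddag]
      · exfalso; apply hne; simp [dgam, hc]; exact .refl _
  | star e ihe =>
      have := ihe (not_zero_eseq hne); simpa [ddag] using this
  | dagger e ihe =>
      by_cases hc : cong g e ∧ cong h (SPR.dagger e)
      · rw [ddag_cong hc.1, ddag_cong hc.2]; simp [ddag]
      · exfalso; apply hne; simp [dgam, hc]; exact .refl _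

lemma dleq_ddag {x y : SPR A} (h : dleq x y) : ddag x ≤ ddag y := by
  induction h with
  | refl e => exact le_rfl
  | trans _ _ ih1 ih2 => exact ih1.trans ih2
  | congr hc => exact le_of_eq (ddag_cong hc)
  | delta e a => exact ddag_dseq e a
  | gamma e g h => exact ddag_dgam e g h
  | forkL hne => exact (fork_bound hne).1
  | forkR hne => exact (fork_bound hne).2

lemma key {f : SPR A} : ∀ {x y : SPR A}, dleq x y →
    (cong y (SPR.dagger f) ∨ ddag y ≤ ddag f) →
    (cong x (SPR.dagger f) ∨ ddag x ≤ ddag f) := by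
  intro x y h
  induction h with
  | refl e => exact id
  | trans _ _ ih1 ih2 => exact fun hP => ih1 (ih2 hP)
  | congr hc =>
      rintro (hcy | hle)
      · exact Or.inl (hc.trans hcy)
      · exact Or.inr (ddag_cong hc ▸ hle)
  | delta e a =>
      rintro (hc | hle)
      · right
        have hcz : cong (dseq e a) SPR.zero := by
          simpa [dseq] using dseq_compat hc a
        rw [ddag_cong hcz]; simp [ddag]
      · exact Or.inr ((ddag_dseq e a).trans hle)
  | gamma e g h =>
      rintro (hc | hle)
      · right
        have h0 : cong (dgam e g h) (dgam (SPR.dagger f) g h) := dgam_compat hc g h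
        have : ddag (dgam e g h) = ddag (dgam (SPR.dagger f) g h) := ddag_cong h0
        rw [this]
        unfold dgam; split <;> simp [ddag]
      · exact Or.inr ((ddag_dgam e g h).trans hle)
  | forkL hne =>
      rename_i e g h
      rintro (hc | hle)
      · by_cases hcond : cong g f ∧ cong h (SPR.dagger f)
        · right; rw [ddag_cong hcond.1]
        · exfalso; apply hne
          have hz : dgam (SPR.dagger f) g h = SPR.zero := by simp [dgam, hcond]
          exact (dgam_compat hc g h).trans (by rw [hz]; exact .refl _)
      · exact Or.inr ((fork_bound hne).1.trans hle)
  | forkR hne =>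
      rename_i e g h
      rintro (hc | hle)
      · by_cases hcond : cong g f ∧ cong h (SPR.dagger f)
        · exact Or.inl hcond.2
        · exfalso; apply hne
          have hz : dgam (SPR.dagger f) g h = SPR.zero := by simp [dgam, hcond]
          exact (dgam_compat hc g h).trans (by rw [hz]; exact .refl _)
      · exact Or.inr ((fork_bound hne).2.trans hle)

end Aux

/-- Loops through a parallel star in the trace dependency preorder are trivial. -/
theorem dagger_loops {A : Type} {e f : SPR A}
    (h1 : dleq e (SPR.dagger f)) (h2 : dleq (SPR.dagger f) e) :
    cong e (SPR.dagger f) := by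
  rcases key h1 (Or.inl (cong.refl _)) with hc | hle
  · exact hc
  · exfalso
    have := dleq_ddag h2
    simp [ddag] at this
    omega
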